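/- In A = C[t^3,t^4,t^5] with dualizing module ω generated by η_1 = dt/t^2 and η_2 = dt/t^3, one has D(a)∧η_1 = 0 and D(a)∧η_2 = 0 in Λ²_A(ω) for every a ∈ A, where D: A → ω is the canonical derivation D(f) = f'(t)dt. -/

import Mathlib

noncomputable section

set_option synthInstance.maxHeartbeats 1000000
set_option maxHeartbeats 4000000

/-- The coordinate ring `ℂ[t³, t⁴, t⁵]` of the monomial space curve, as a subalgebra
of the field of rational functions (`t := X`). -/
abbrev MonCurve : Subalgebra ℂ (RatFunc ℂ) :=
  Algebra.adjoin ℂ {RatFunc.X ^ 3, RatFunc.X ^ 4, RatFunc.X ^ 5}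

/-- The dualizing module `ω`, realized Rosenlicht-style as the `MonCurve`-submodule of
(coefficients of) meromorphic differentials generated by `η₁ = dt/t²` and `η₂ = dt/t³`,
identifying `g·dt` with `g`. -/
abbrev MonOmega : Submodule MonCurve (RatFunc ℂ) :=
  Submodule.span MonCurve {RatFunc.X⁻¹ ^ 2, RatFunc.X⁻¹ ^ 3}

def eta1 : MonOmega := ⟨RatFunc.X⁻¹ ^ 2, Submodule.subset_span (Set.mem_insert _ _)⟩

def eta2 : MonOmega :=
  ⟨RatFunc.X⁻¹ ^ 3, Submodule.subset_span (Set.mem_insert_of_mem _ rfl)⟩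

def tcube : MonCurve := ⟨RatFunc.X ^ 3, Algebra.subset_adjoin (Set.mem_insert _ _)⟩

def tfourth : MonCurve :=
  ⟨RatFunc.X ^ 4, Algebra.subset_adjoin (Set.mem_insert_of_mem _ (Set.mem_insert _ _))⟩

def tfifth : MonCurve :=
  ⟨RatFunc.X ^ 5,
    Algebra.subset_adjoin (Set.mem_insert_of_mem _ (Set.mem_insert_of_mem _ rfl))⟩

/-- If `x = c • y` then `ι x ∧ ι y = 0` in the exterior algebra. -/
lemma wedge_zero_of_smul (x : MonOmega) (c : MonCurve) (y : MonOmega) (h : x = c • y) :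
    ExteriorAlgebra.ι MonCurve x * ExteriorAlgebra.ι MonCurve y = 0 := by
  rw [h, map_smul, smul_mul_assoc, ExteriorAlgebra.ι_sq_zero, smul_zero]

lemma coe_smul' (c : MonCurve) (y : MonOmega) :
    ((c • y : MonOmega) : RatFunc ℂ) = (c : RatFunc ℂ) * (y : RatFunc ℂ) := rfl

theorem adjoin_induction'' {R A : Type*} [CommSemiring R] [Semiring A] [Algebra R A] {s : Set A}
    {p : Algebra.adjoin R s → Prop} (a : Algebra.adjoin R s)
    (mem : ∀ (x) (h : x ∈ s), p ⟨x, Algebra.subset_adjoin h⟩)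
    (algebraMap : ∀ r, p (algebraMap R _ r))
    (add : ∀ x y, p x → p y → p (x + y)) (mul : ∀ x y, p x → p y → p (x * y)) : p a :=
  Subtype.recOn a fun b hb => by
    induction hb using Algebra.adjoin_induction with
    | mem _ h => exact mem _ h
    | algebraMap _ => exact algebraMap _
    | mul _ _ _ _ h₁ h₂ => exact mul _ _ h₁ h₂
    | add _ _ _ _ h₁ h₂ => exact add _ _ h₁ h₂

/-- In `A = ℂ[t³,t⁴,t⁵]` with dualizing module `ω` generated by
`η₁ = dt/t²` and `η₂ = dt/t³`, the canonical derivation `D(f) = f'(t) dt` satisfies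
`D(a) ∧ η₁ = 0` and `D(a) ∧ η₂ = 0` in `Λ²_A(ω)` for every `a ∈ A`. -/
theorem monomial_curve_wedge_vanishes
    (D : MonCurve → MonOmega)
    (Dadd : ∀ f g : MonCurve, D (f + g) = D f + D g)
    (Dleib : ∀ f g : MonCurve, D (f * g) = f • D g + g • D f)
    (Dconst : ∀ c : ℂ, D (algebraMap ℂ MonCurve c) = 0)
    (D3 : (D tcube : RatFunc ℂ) = 3 * RatFunc.X ^ 2)
    (D4 : (D tfourth : RatFunc ℂ) = 4 * RatFunc.X ^ 3)
    (D5 : (D tfifth : RatFunc ℂ) = 5 * RatFunc.X ^ 4) :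
    ∀ a : MonCurve,
      ExteriorAlgebra.ι MonCurve (D a) * ExteriorAlgebra.ι MonCurve eta1 = 0
      ∧ ExteriorAlgebra.ι MonCurve (D a) * ExteriorAlgebra.ι MonCurve eta2 = 0 := by
  have hX : (RatFunc.X : RatFunc ℂ) ≠ 0 := RatFunc.X_ne_zero
  have k1 : D tcube = ((3:ℂ) • tfourth) • eta1 := by
    apply Subtype.ext
    rw [coe_smul', D3]
    simp only [SetLike.val_smul, tfourth, eta1, Algebra.smul_def]
    field_simp
    simp [map_ofNat]
    ring
    exact Or.inl rfl
  have k2 : D tcube = ((3:ℂ) • tfifth) • eta2 := by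
    apply Subtype.ext
    rw [coe_smul', D3]
    simp only [SetLike.val_smul, tfifth, eta2, Algebra.smul_def]
    field_simp
    simp [map_ofNat]
    ring
    exact Or.inl rfl
  have k3 : D tfourth = ((4:ℂ) • tfifth) • eta1 := by
    apply Subtype.ext
    rw [coe_smul', D4]
    simp only [SetLike.val_smul, tfifth, eta1, Algebra.smul_def]
    field_simp
    simp [map_ofNat]
    ring
    exact Or.inl rfl
  have k4 : D tfourth = ((4:ℂ) • (tcube * tcube)) • eta2 := by
    apply Subtype.ext
    rw [coe_smul', D4]
    simp only [SetLike.val_smul, MulMemClass.coe_mul, tcube, eta2, Algebra.smul_def]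
    field_simp
    simp [map_ofNat]
    ring
    rfl
  have k5 : D tfifth = ((5:ℂ) • (tcube * tcube)) • eta1 := by
    apply Subtype.ext
    rw [coe_smul', D5]
    simp only [SetLike.val_smul, MulMemClass.coe_mul, tcube, eta1, Algebra.smul_def]
    field_simp
    simp [map_ofNat]
    ring
    rfl
  have k6 : D tfifth = ((5:ℂ) • (tcube * tfourth)) • eta2 := by
    apply Subtype.ext
    rw [coe_smul', D5]
    simp only [SetLike.val_smul, MulMemClass.coe_mul, tcube, tfourth, eta2, Algebra.smul_def]
    field_simp
    simp [map_ofNat]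
    ring
    rfl
  intro a
  induction a using adjoin_induction'' with
  | mem x hx =>
    rcases hx with h | h | h
    · subst h
      exact ⟨wedge_zero_of_smul _ _ _ k1, wedge_zero_of_smul _ _ _ k2⟩
    · subst h
      exact ⟨wedge_zero_of_smul _ _ _ k3, wedge_zero_of_smul _ _ _ k4⟩
    · subst h
      exact ⟨wedge_zero_of_smul _ _ _ k5, wedge_zero_of_smul _ _ _ k6⟩
  | algebraMap r =>
    rw [Dconst]
    simp
  | add x y hx hy =>
    refine ⟨?_, ?_⟩
    · rw [Dadd, map_add, add_mul, hx.1, hy.1, add_zero]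
    · rw [Dadd, map_add, add_mul, hx.2, hy.2, add_zero]
  | mul x y hx hy =>
    refine ⟨?_, ?_⟩
    · rw [Dleib, map_add, map_smul, map_smul, add_mul, smul_mul_assoc, smul_mul_assoc,
        hy.1, hx.1, smul_zero, smul_zero, add_zero]
    · rw [Dleib, map_add, map_smul, map_smul, add_mul, smul_mul_assoc, smul_mul_assoc,
        hy.2, hx.2, smul_zero, smul_zero, add_zero]

end
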